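/- Let Ω = ⊕_{p,k} Ω^p_k be a bigraded vector space (p = form degree with 0 ≤ p ≤ n, k = antifield number ≥ 0) with two anticommuting differentials δ (of bidegree (0,−1)) and d (of bidegree (+1,0)): δ² = d² = δd + dδ = 0. Assume H_k(δ) = 0 for all k > 0 and H^p(d) = 0 for 0 < p < n. Then for all k > 1 and 1 < p ≤ n there is an isomorphism H^p_k(δ|d) ≅ H^{p−1}_{k−1}(δ|d), induced by the descent: a cocycle a^p_k with δa^p_k + da^{p−1}_{k−1} = 0 is mapped to the class of a^{p−1}_{k−1}. Here H^p_k(δ|d) is defined by cocycles δa + db = 0 modulo coboundaries a = δc + de. -/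
import Mathlib


/-- Descent isomorphism `H^p_k(δ|d) ≅ H^{p−1}_{k−1}(δ|d)` (for `k > 1`, `1 < p ≤ n`) in a
bigraded space with anticommuting differentials `δ` (antifield degree −1) and `d` (form
degree +1), given `H_k(δ) = 0` for `k > 0` and `H^p(d) = 0` for `0 < p < n`. Writing
`p = q+2`, `k = m+2`, the isomorphism induced by the descent `a ↦ b` (with `δa + db = 0`)
is encoded by: well-definedness (the descendant is a cocycle), surjectivity, and
injectivity on classes. -/
theorem stmt_12 (K : Type*) [Field K] (n : ℕ)
    (Ω : ℕ → ℕ → Type*) [∀ p q, AddCommGroup (Ω p q)] [∀ p q, Module K (Ω p q)]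
    (δ : ∀ p q, Ω p (q + 1) →ₗ[K] Ω p q)
    (d : ∀ p q, Ω p q →ₗ[K] Ω (p + 1) q)
    (hδδ : ∀ p q (a : Ω p (q + 2)), δ p q (δ p (q + 1) a) = 0)
    (hdd : ∀ p q (a : Ω p q), d (p + 1) q (d p q a) = 0)
    (hδd : ∀ p q (a : Ω p (q + 1)), d p q (δ p q a) + δ (p + 1) q (d p (q + 1) a) = 0)
    (hδacyc : ∀ p q (a : Ω p (q + 1)), δ p q a = 0 → ∃ b : Ω p (q + 2), a = δ p (q + 1) b)
    (hdpoin : ∀ p q, p + 1 < n → ∀ a : Ω (p + 1) q, d (p + 1) q a = 0 →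
      ∃ b : Ω p q, a = d p q b) :
    ∀ q m : ℕ, q + 2 ≤ n →
      ((∀ (a : Ω (q + 2) (m + 2)) (b : Ω (q + 1) (m + 1)),
          δ (q + 2) (m + 1) a + d (q + 1) (m + 1) b = 0 →
          ∃ c : Ω q m, δ (q + 1) m b + d q m c = 0) ∧
       (∀ b : Ω (q + 1) (m + 1), (∃ c : Ω q m, δ (q + 1) m b + d q m c = 0) →
          ∃ a : Ω (q + 2) (m + 2), δ (q + 2) (m + 1) a + d (q + 1) (m + 1) b = 0) ∧
       (∀ (a : Ω (q + 2) (m + 2)) (b : Ω (q + 1) (m + 1)),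
          δ (q + 2) (m + 1) a + d (q + 1) (m + 1) b = 0 →
          (∃ (f : Ω (q + 1) (m + 2)) (g : Ω q (m + 1)),
            b = δ (q + 1) (m + 1) f + d q (m + 1) g) →
          ∃ (F : Ω (q + 2) (m + 3)) (G : Ω (q + 1) (m + 2)),
            a = δ (q + 2) (m + 2) F + d (q + 1) (m + 2) G)) := by
  intro q m hqn
  refine ⟨?_, ?_, ?_⟩
  · -- well-definedness
    intro a b hab
    -- δ(db) = -d(δb), and δ(db) = δ(-δa) = 0, so d(δb) = 0
    have h1 : d (q + 1) m (δ (q + 1) m b) + δ (q + 2) m (d (q + 1) (m + 1) b) = 0 :=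
      hδd (q + 1) m b
    have hdb : d (q + 1) (m + 1) b = -(δ (q + 2) (m + 1) a) := by
      linear_combination (norm := module) hab
    have h2 : d (q + 1) m (δ (q + 1) m b) = 0 := by
      have := hδδ (q + 2) m a
      rw [hdb, map_neg] at h1
      linear_combination (norm := module) h1 + this
    obtain ⟨c', hc'⟩ := hdpoin q m (lt_of_lt_of_le (Nat.lt_succ_self (q + 1)) hqn)
      (δ (q + 1) m b) h2
    exact ⟨-c', by rw [map_neg]; linear_combination (norm := module) hc'⟩
  · -- surjectivity
    rintro b ⟨c, hc⟩
    have h1 : d (q + 1) m (δ (q + 1) m b) + δ (q + 2) m (d (q + 1) (m + 1) b) = 0 :=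
      hδd (q + 1) m b
    have hδb : δ (q + 1) m b = -(d q m c) := by linear_combination (norm := module) hc
    have h2 : δ (q + 2) m (d (q + 1) (m + 1) b) = 0 := by
      have := hdd q m c
      rw [hδb, map_neg] at h1
      linear_combination (norm := module) h1 + this
    obtain ⟨A, hA⟩ := hδacyc (q + 2) m (d (q + 1) (m + 1) b) h2
    exact ⟨-A, by rw [map_neg]; linear_combination (norm := module) hA⟩
  · -- injectivity
    rintro a b hab ⟨f, g, hb⟩
    -- δ(a - d f) = 0
    have h1 : d (q + 1) (m + 1) (δ (q + 1) (m + 1) f)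
        + δ (q + 2) (m + 1) (d (q + 1) (m + 2) f) = 0 := hδd (q + 1) (m + 1) f
    have h2 : δ (q + 2) (m + 1) (a - d (q + 1) (m + 2) f) = 0 := by
      rw [map_sub]
      have hdg := hdd q (m + 1) g
      have : d (q + 1) (m + 1) b = d (q + 1) (m + 1) (δ (q + 1) (m + 1) f) := by
        rw [hb, map_add, hdg, add_zero]
      linear_combination (norm := module) hab - this - h1
    obtain ⟨F, hF⟩ := hδacyc (q + 2) (m + 1) (a - d (q + 1) (m + 2) f) h2
    exact ⟨F, f, by linear_combination (norm := module) hF⟩
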